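/- Let X and Y be finite nonempty sets, let α ∈ (0,1) ∪ (1,∞), let p be a strictly positive probability distribution on X, and let W be a channel from X to Y. Let p̃(x) = p(x)^{1/α} / ∑_{x'} p(x')^{1/α} be the (1/α)-tilted distribution of p. Then the supremum over all strictly positive families r_{X|Y} of (∑_{x,y} p̃(x) · W(y|x) · r(x|y)^{(α−1)/α})^{α/(α−1)} equals (∑_{x} p(x)^{1/α})^{−α/(α−1)} · (∑_{y∈Y} (∑_{x∈X} p(x) · W(y|x)^α)^{1/α})^{α/(α−1)}; that is, the generalized conditional vulnerability under the tilted prior equals exp(−H_α^S(X|Y)), the exponential of minus the Sibson conditional entropy of order α. -/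

import Mathlib

open Real BigOperators Finset

section aux
variable {X : Type*} [Fintype X]

lemma sib_sum_eq (α : ℝ) (hα0 : 0 < α) (a r : X → ℝ) (hr : ∀ x, 0 < r x) :
    ∑ x, a x * r x ^ ((α - 1)/α) = ∑ x, r x * (a x * r x ^ (-(1/α))) := by
  refine Finset.sum_congr rfl fun x _ => ?_
  have h1 : (α - 1)/α = 1 + (-(1/α)) := by field_simp; ring
  rw [h1, Real.rpow_add (hr x), Real.rpow_one]; ring

lemma sib_z_sum (α : ℝ) (hα0 : 0 < α) (a r : X → ℝ) (ha : ∀ x, 0 ≤ a x) (hr : ∀ x, 0 < r x) :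
    ∑ x, r x * (a x * r x ^ (-(1/α))) ^ α = ∑ x, a x ^ α := by
  refine Finset.sum_congr rfl fun x _ => ?_
  rw [Real.mul_rpow (ha x) (Real.rpow_nonneg (hr x).le _), ← Real.rpow_mul (hr x).le]
  have : -(1/α) * α = -1 := by field_simp
  rw [this, Real.rpow_neg_one]
  field_simp [(hr x).ne']

lemma holder_gt1 (α : ℝ) (hα : 1 < α) (a r : X → ℝ) (ha : ∀ x, 0 ≤ a x)
    (hr : ∀ x, 0 < r x) (hr1 : ∑ x, r x = 1) :
    ∑ x, a x * r x ^ ((α - 1)/α) ≤ (∑ x, a x ^ α) ^ (1/α) := by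
  have hα0 : (0:ℝ) < α := lt_trans one_pos hα
  have hz : ∀ x ∈ Finset.univ, 0 ≤ a x * r x ^ (-(1/α)) :=
    fun x _ => mul_nonneg (ha x) (Real.rpow_nonneg (hr x).le _)
  rw [sib_sum_eq α hα0 a r hr]
  calc ∑ x, r x * (a x * r x ^ (-(1/α)))
      ≤ (∑ x, r x * (a x * r x ^ (-(1/α))) ^ α) ^ (1/α) :=
        Real.arith_mean_le_rpow_mean Finset.univ r _ (fun x _ => (hr x).le) hr1 hz hα.le
    _ = (∑ x, a x ^ α) ^ (1/α) := by rw [sib_z_sum α hα0 a r ha hr]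

lemma holder_lt1 (α : ℝ) (hα0 : 0 < α) (hα : α < 1) (a r : X → ℝ) (ha : ∀ x, 0 ≤ a x)
    (hr : ∀ x, 0 < r x) (hr1 : ∑ x, r x = 1) :
    (∑ x, a x ^ α) ^ (1/α) ≤ ∑ x, a x * r x ^ ((α - 1)/α) := by
  set z : X → ℝ := fun x => a x * r x ^ (-(1/α)) with hzdef
  have hz : ∀ x, 0 ≤ z x := fun x => mul_nonneg (ha x) (Real.rpow_nonneg (hr x).le _)
  have hS0 : 0 ≤ ∑ x, r x * z x :=
    Finset.sum_nonneg fun x _ => mul_nonneg (hr x).le (hz x)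
  have key : ∑ x, a x ^ α ≤ (∑ x, r x * z x) ^ α := by
    have h := Real.arith_mean_le_rpow_mean Finset.univ r (fun x => z x ^ α)
      (fun x _ => (hr x).le) hr1 (fun x _ => Real.rpow_nonneg (hz x) α)
      (p := 1/α) (by rw [le_div_iff₀ hα0, one_mul]; exact hα.le)
    have h2 : ∀ x, (z x ^ α) ^ (1/α) = z x := by
      intro x
      rw [← Real.rpow_mul (hz x), mul_one_div_cancel hα0.ne', Real.rpow_one]
    rw [sib_z_sum α hα0 a r ha hr] at h
    simp only [h2] at h
    calc ∑ x, a x ^ α ≤ (∑ x, r x * z x) ^ (1/(1/α)) := h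
      _ = (∑ x, r x * z x) ^ α := by rw [one_div_one_div]
  rw [sib_sum_eq α hα0 a r hr]
  calc (∑ x, a x ^ α) ^ (1/α) ≤ ((∑ x, r x * z x) ^ α) ^ (1/α) :=
        Real.rpow_le_rpow (Finset.sum_nonneg fun x _ => Real.rpow_nonneg (ha x) α) key
          (by positivity)
    _ = ∑ x, r x * z x := by
        rw [← Real.rpow_mul hS0, mul_one_div_cancel hα0.ne', Real.rpow_one]

lemma Ssum_eq (α : ℝ) (hα0 : 0 < α) (a : X → ℝ) (ha : ∀ x, 0 ≤ a x) :
    ∑ x, a x * ((a x ^ α) / (∑ x', a x' ^ α)) ^ ((α - 1)/α)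
      = (∑ x, a x ^ α) ^ (1/α) := by
  set T : ℝ := ∑ x', a x' ^ α with hT
  have hT0 : 0 ≤ T := Finset.sum_nonneg fun x _ => Real.rpow_nonneg (ha x) α
  rcases eq_or_lt_of_le hT0 with hTz | hTpos
  · have hall : ∀ x, a x = 0 := by
      intro x
      have hx : a x ^ α = 0 := by
        have := (Finset.sum_eq_zero_iff_of_nonneg
          (fun x _ => Real.rpow_nonneg (ha x) α)).mp hTz.symm x (Finset.mem_univ x)
        exact this
      rcases (Real.rpow_eq_zero_iff_of_nonneg (ha x)).mp hx with ⟨h1, _⟩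
      exact h1
    simp only [hall, Real.zero_rpow hα0.ne', zero_mul, Finset.sum_const_zero, ← hTz]
    exact (Real.zero_rpow (by positivity : (1:ℝ)/α ≠ 0)).symm
  · have hstep : ∀ x, a x * ((a x ^ α) / T) ^ ((α - 1)/α) = a x ^ α * T ^ (-((α-1)/α)) := by
      intro x
      rcases eq_or_lt_of_le (ha x) with hx | hx
      · rw [← hx]; simp [Real.zero_rpow hα0.ne']
      · rw [Real.div_rpow (Real.rpow_nonneg (ha x) _) hT0, ← Real.rpow_mul (ha x)]
        have he : α * ((α - 1)/α) = α - 1 := by field_simp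
        have h2 : a x * a x ^ (α - 1) = a x ^ α := by
          rw [Real.rpow_sub hx, Real.rpow_one]
          field_simp
        rw [he, Real.rpow_neg hT0, div_eq_mul_inv, ← mul_assoc, h2]
    rw [Finset.sum_congr rfl fun x _ => hstep x, ← Finset.sum_mul, ← hT]
    nth_rewrite 1 [← Real.rpow_one T]
    rw [← Real.rpow_add hTpos]
    congr 1
    field_simp
    ring
end aux
theorem conditional_vulnerability_eq_exp_neg_sibson
    {X Y : Type*} [Fintype X] [Fintype Y] [Nonempty X] [Nonempty Y]
    (α : ℝ) (hα0 : 0 < α) (hα1 : α ≠ 1)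
    (p : X → ℝ) (hp : ∀ x, 0 < p x) (hp1 : (∑ x, p x) = 1)
    (W : X → Y → ℝ) (hW : ∀ x y, 0 ≤ W x y) (hW1 : ∀ x, (∑ y, W x y) = 1)
    (pt : X → ℝ) (hpt : ∀ x, pt x = p x ^ (1 / α) / ∑ x', p x' ^ (1 / α)) :
    sSup {v : ℝ | ∃ r : Y → X → ℝ, (∀ y x, 0 < r y x) ∧ (∀ y, (∑ x, r y x) = 1) ∧
        v = (∑ z : X × Y, pt z.1 * W z.1 z.2 * r z.2 z.1 ^ ((α - 1) / α)) ^ (α / (α - 1))}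
      = (∑ x, p x ^ (1 / α)) ^ (-(α / (α - 1)))
          * (∑ y, (∑ x, p x * W x y ^ α) ^ (1 / α)) ^ (α / (α - 1)) := by
  classical
  have hα1' : α - 1 ≠ 0 := sub_ne_zero.mpr hα1
  set Z : ℝ := ∑ x', p x' ^ (1 / α) with hZdef
  have hZpos : 0 < Z :=
    Finset.sum_pos (fun x _ => Real.rpow_pos_of_pos (hp x) _) Finset.univ_nonempty
  have hptpos : ∀ x, 0 < pt x := fun x => by
    rw [hpt x]; exact div_pos (Real.rpow_pos_of_pos (hp x) _) hZpos
  set a : X → Y → ℝ := fun x y => pt x * W x y with hadef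
  have ha0 : ∀ x y, 0 ≤ a x y := fun x y => mul_nonneg (hptpos x).le (hW x y)
  set T : Y → ℝ := fun y => ∑ x, a x y ^ α with hTdef
  have hT0 : ∀ y, 0 ≤ T y := fun y => by
    simp only [hTdef]
    exact Finset.sum_nonneg fun x _ => Real.rpow_nonneg (ha0 x y) α
  set B : ℝ := ∑ y, T y ^ (1 / α) with hBdef
  obtain ⟨x0⟩ := ‹Nonempty X›
  obtain ⟨y0, hy0⟩ : ∃ y0, 0 < W x0 y0 := by
    by_contra h
    push_neg at h
    have h2 : ∑ y, W x0 y = 0 :=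
      Finset.sum_eq_zero fun y _ => le_antisymm (h y) (hW x0 y)
    rw [hW1 x0] at h2; norm_num at h2
  have hTy0 : 0 < T y0 := by
    have h1 : 0 < a x0 y0 ^ α :=
      Real.rpow_pos_of_pos (mul_pos (hptpos x0) hy0) α
    simp only [hTdef]
    exact lt_of_lt_of_le h1 (Finset.single_le_sum
      (fun x _ => Real.rpow_nonneg (ha0 x y0) α) (Finset.mem_univ x0))
  have hB : 0 < B := by
    simp only [hBdef]
    exact lt_of_lt_of_le (Real.rpow_pos_of_pos hTy0 _) (Finset.single_le_sum
      (fun y _ => Real.rpow_nonneg (hT0 y) _) (Finset.mem_univ y0))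
  set L : ℝ := B ^ (α / (α - 1)) with hLdef
  have hsum : ∀ r : Y → X → ℝ,
      (∑ z : X × Y, pt z.1 * W z.1 z.2 * r z.2 z.1 ^ ((α - 1) / α))
        = ∑ y, ∑ x, a x y * r y x ^ ((α - 1) / α) := by
    intro r
    simp only [hadef]
    rw [Fintype.sum_prod_type]
    exact Finset.sum_comm
  -- upper bound
  have hub : ∀ r : Y → X → ℝ, (∀ y x, 0 < r y x) → (∀ y, ∑ x, r y x = 1) →
      (∑ y, ∑ x, a x y * r y x ^ ((α - 1) / α)) ^ (α / (α - 1)) ≤ L := by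
    intro r hr hr1
    rcases lt_or_gt_of_ne hα1 with hlt | hgt
    · have hγneg : α / (α - 1) ≤ 0 :=
        by rw [div_nonpos_iff]; left; constructor <;> linarith
      have hge : B ≤ ∑ y, ∑ x, a x y * r y x ^ ((α - 1) / α) := by
        simp only [hBdef, hTdef]
        exact Finset.sum_le_sum fun y _ =>
          holder_lt1 α hα0 hlt (fun x => a x y) (r y) (fun x => ha0 x y) (hr y) (hr1 y)
      exact Real.rpow_le_rpow_of_nonpos hB hge hγneg
    · have hγ0 : (0:ℝ) ≤ α / (α - 1) := le_of_lt (div_pos hα0 (by linarith))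
      have hle : ∑ y, ∑ x, a x y * r y x ^ ((α - 1) / α) ≤ B := by
        simp only [hBdef, hTdef]
        exact Finset.sum_le_sum fun y _ =>
          holder_gt1 α hgt (fun x => a x y) (r y) (fun x => ha0 x y) (hr y) (hr1 y)
      have hnn : 0 ≤ ∑ y, ∑ x, a x y * r y x ^ ((α - 1) / α) :=
        Finset.sum_nonneg fun y _ => Finset.sum_nonneg fun x _ =>
          mul_nonneg (ha0 x y) (Real.rpow_nonneg (hr y x).le _)
      exact Real.rpow_le_rpow hnn hle hγ0
  -- approximating family
  set n : ℝ := (Fintype.card X : ℝ) with hndef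
  have hn0 : 0 < n := by
    simp only [hndef]; exact_mod_cast Fintype.card_pos
  set rr : ℝ → Y → X → ℝ := fun δ y x => (a x y ^ α + δ) / (T y + n * δ) with hrrdef
  have hrrpos : ∀ δ : ℝ, 0 < δ → ∀ y x, 0 < rr δ y x := by
    intro δ hδ y x
    simp only [hrrdef]
    exact div_pos (add_pos_of_nonneg_of_pos (Real.rpow_nonneg (ha0 x y) α) hδ)
      (add_pos_of_nonneg_of_pos (hT0 y) (mul_pos hn0 hδ))
  have hrrsum : ∀ δ : ℝ, 0 < δ → ∀ y, ∑ x, rr δ y x = 1 := by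
    intro δ hδ y
    have hden : 0 < T y + n * δ :=
      add_pos_of_nonneg_of_pos (hT0 y) (mul_pos hn0 hδ)
    simp only [hrrdef]
    rw [← Finset.sum_div, Finset.sum_add_distrib, Finset.sum_const, nsmul_eq_mul,
      div_eq_one_iff_eq hden.ne']
    simp only [hTdef, hndef, Finset.card_univ]
  have hF : Filter.Tendsto
      (fun δ => ∑ y, ∑ x, a x y * rr δ y x ^ ((α - 1) / α))
      (nhdsWithin 0 (Set.Ioi 0)) (nhds B) := by
    have hBeq : B = ∑ y, ∑ x, a x y * (a x y ^ α / T y) ^ ((α - 1) / α) := by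
      simp only [hBdef, hTdef]
      exact (Finset.sum_congr rfl fun y _ =>
        (Ssum_eq α hα0 (fun x => a x y) (fun x => ha0 x y))).symm
    rw [hBeq]
    simp only [hrrdef]
    apply tendsto_finset_sum
    intro y _
    apply tendsto_finset_sum
    intro x _
    rcases eq_or_lt_of_le (ha0 x y) with hax | hax
    · have heq : (fun δ : ℝ => a x y * ((a x y ^ α + δ) / (T y + n * δ)) ^ ((α - 1) / α))
          = fun _ => a x y * (a x y ^ α / T y) ^ ((α - 1) / α) := by
        funext δ; rw [← hax]; simp
      rw [heq]; exact tendsto_const_nhds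
    · have hc : 0 < a x y ^ α := Real.rpow_pos_of_pos hax α
      have hTy : 0 < T y := by
        simp only [hTdef]
        exact lt_of_lt_of_le hc (Finset.single_le_sum
          (fun x' _ => Real.rpow_nonneg (ha0 x' y) α) (Finset.mem_univ x))
      have hbase : Filter.Tendsto (fun δ : ℝ => (a x y ^ α + δ) / (T y + n * δ))
          (nhdsWithin 0 (Set.Ioi 0)) (nhds (a x y ^ α / T y)) := by
        have hcont : ContinuousAt (fun δ : ℝ => (a x y ^ α + δ) / (T y + n * δ)) 0 := by
          apply ContinuousAt.div
          · exact continuousAt_const.add continuousAt_id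
          · exact continuousAt_const.add (continuousAt_id.const_mul n)
          · simpa using hTy.ne'
        have h3 := hcont.tendsto.mono_left (nhdsWithin_le_nhds (s := Set.Ioi (0:ℝ)))
        simpa using h3
      have hrpow : Filter.Tendsto (fun t : ℝ => t ^ ((α - 1) / α))
          (nhds (a x y ^ α / T y)) (nhds ((a x y ^ α / T y) ^ ((α - 1) / α))) :=
        (Real.continuousAt_rpow_const _ _ (Or.inl (div_pos hc hTy).ne')).tendsto
      exact (hrpow.comp hbase).const_mul (a x y)
  have hg : Filter.Tendsto
      (fun δ => (∑ y, ∑ x, a x y * rr δ y x ^ ((α - 1) / α)) ^ (α / (α - 1)))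
      (nhdsWithin 0 (Set.Ioi 0)) (nhds L) :=
    ((Real.continuousAt_rpow_const B _ (Or.inl hB.ne')).tendsto).comp hF
  have hlub : IsLUB {v : ℝ | ∃ r : Y → X → ℝ, (∀ y x, 0 < r y x) ∧ (∀ y, (∑ x, r y x) = 1) ∧
      v = (∑ z : X × Y, pt z.1 * W z.1 z.2 * r z.2 z.1 ^ ((α - 1) / α)) ^ (α / (α - 1))} L := by
    constructor
    · rintro v ⟨r, hr, hr1, rfl⟩
      rw [hsum r]
      exact hub r hr hr1
    · intro b hb
      refine le_of_tendsto hg ?_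
      filter_upwards [self_mem_nhdsWithin] with δ hδ
      exact hb ⟨rr δ, hrrpos δ hδ, hrrsum δ hδ, by rw [hsum (rr δ)]⟩
  have hne : Set.Nonempty {v : ℝ | ∃ r : Y → X → ℝ, (∀ y x, 0 < r y x) ∧ (∀ y, (∑ x, r y x) = 1) ∧
      v = (∑ z : X × Y, pt z.1 * W z.1 z.2 * r z.2 z.1 ^ ((α - 1) / α)) ^ (α / (α - 1))} := by
    refine ⟨_, fun _ _ => n⁻¹, fun y x => inv_pos.mpr hn0, fun y => ?_, rfl⟩
    rw [Finset.sum_const, nsmul_eq_mul]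
    exact mul_inv_cancel₀ hn0.ne'
  rw [hlub.csSup_eq hne]
  -- final algebra
  have hTy_eq : ∀ y, T y ^ (1/α) = (∑ x, p x * W x y ^ α) ^ (1/α) / Z := by
    intro y
    have h1 : T y = (∑ x, p x * W x y ^ α) / Z ^ α := by
      simp only [hTdef, hadef]
      rw [Finset.sum_div]
      refine Finset.sum_congr rfl fun x _ => ?_
      rw [Real.mul_rpow (hptpos x).le (hW x y), hpt x,
        Real.div_rpow (Real.rpow_nonneg (hp x).le _) hZpos.le,
        ← Real.rpow_mul (hp x).le, one_div_mul_cancel hα0.ne', Real.rpow_one]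
      ring
    rw [h1, Real.div_rpow (Finset.sum_nonneg fun x _ =>
        mul_nonneg (hp x).le (Real.rpow_nonneg (hW x y) α)) (Real.rpow_nonneg hZpos.le α),
      ← Real.rpow_mul hZpos.le, mul_one_div_cancel hα0.ne', Real.rpow_one]
  have hQ0 : 0 ≤ ∑ y, (∑ x, p x * W x y ^ α) ^ (1/α) :=
    Finset.sum_nonneg fun y _ => Real.rpow_nonneg
      (Finset.sum_nonneg fun x _ => mul_nonneg (hp x).le (Real.rpow_nonneg (hW x y) α)) _
  have hBeq2 : B = (∑ y, (∑ x, p x * W x y ^ α) ^ (1/α)) / Z := by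
    rw [hBdef, Finset.sum_div]
    exact Finset.sum_congr rfl fun y _ => hTy_eq y
  rw [hLdef, hBeq2, Real.div_rpow hQ0 hZpos.le, div_eq_mul_inv,
    ← Real.rpow_neg hZpos.le, mul_comm]
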